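/- Let $(P_1,\dots,P_n)$ and $(Q_1,\dots,Q_n)$ be tuples of probability measures with $Q_1,\dots,Q_n$ pairwise equivalent (mutually absolutely continuous). If $(P_1,\dots,P_n)\prec_h(Q_1,\dots,Q_n)$, then $P_1,\dots,P_n$ are pairwise equivalent. -/

import Mathlib

open MeasureTheory Filter
open scoped ENNReal Topology

section Aux

variable {Ω : Type} [MeasurableSpace Ω]

lemma avg_isProb (n : ℕ) (hn : 0 < n) (P : Fin n → Measure Ω)
    [∀ i, IsProbabilityMeasure (P i)] :
    IsProbabilityMeasure ((n : ℝ≥0∞)⁻¹ • ∑ j, P j) := by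
  constructor
  simp only [Measure.smul_apply, Measure.coe_finset_sum, Finset.sum_apply, measure_univ,
    smul_eq_mul, Finset.sum_const, Finset.card_univ, Fintype.card_fin, nsmul_eq_mul, mul_one]
  exact ENNReal.inv_mul_cancel (by exact_mod_cast hn.ne') (by simp)

lemma comp_ac_avg (n : ℕ) (hn : 0 < n) (P : Fin n → Measure Ω) (i : Fin n) :
    P i ≪ ((n : ℝ≥0∞)⁻¹ • ∑ j, P j) := by
  intro s hs
  simp only [Measure.smul_apply, Measure.coe_finset_sum, Finset.sum_apply, smul_eq_mul] at hs
  rcases mul_eq_zero.mp hs with h | h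
  · exact absurd h (by simp [hn.ne'])
  · exact le_antisymm (h ▸ Finset.single_le_sum (f := fun j => P j s)
      (fun _ _ => zero_le) (Finset.mem_univ i)) (zero_le)

lemma avg_ac (n : ℕ) (P : Fin n → Measure Ω) (j : Fin n)
    (h : ∀ i, P i ≪ P j) : ((n : ℝ≥0∞)⁻¹ • ∑ k, P k) ≪ P j := by
  intro s hs
  simp only [Measure.smul_apply, Measure.coe_finset_sum, Finset.sum_apply, smul_eq_mul]
  rw [Finset.sum_eq_zero (fun i _ => h i hs), mul_zero]

end Aux

/-- convexity of the test function -/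
lemma convex_test (n : ℕ) (i j : Fin n) (k : ℝ) :
    ConvexOn ℝ Set.univ (fun x : Fin n → ℝ => max (x i - k * x j) 0) := by
  refine ⟨convex_univ, fun x _ y _ a b ha hb hab => ?_⟩
  simp only [Pi.add_apply, Pi.smul_apply, smul_eq_mul]
  have h1 : a * x i + b * y i - k * (a * x j + b * y j)
      = a * (x i - k * x j) + b * (y i - k * y j) := by ring
  rw [h1]
  refine max_le ?_ (by positivity)
  have := add_le_add (mul_le_mul_of_nonneg_left (le_max_left (x i - k * x j) 0) ha)
    (mul_le_mul_of_nonneg_left (le_max_left (y i - k * y j) 0) hb)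
  exact this

/-- Proposition 3.6 (iii). If `Q₁,…,Qₙ` are pairwise equivalent (mutually
absolutely continuous) and `(P₁,…,Pₙ) ≺ₕ (Q₁,…,Qₙ)` (multivariate convex order between the
vectors of Radon–Nikodym derivatives with respect to the average measures), then `P₁,…,Pₙ`
are pairwise equivalent. -/
theorem het_order_preserves_equivalence
    {Ω₁ Ω₂ : Type} [MeasurableSpace Ω₁] [MeasurableSpace Ω₂]
    (n : ℕ) (hn : 0 < n)
    (P : Fin n → Measure Ω₁) (Q : Fin n → Measure Ω₂)
    [∀ i, IsProbabilityMeasure (P i)] [∀ i, IsProbabilityMeasure (Q i)]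
    (hequiv : ∀ i j, Q i ≪ Q j)
    (hh : ∀ f : (Fin n → ℝ) → ℝ, ConvexOn ℝ Set.univ f →
      ∫ x, f (fun i =>
          ((P i).rnDeriv ((n : ℝ≥0∞)⁻¹ • ∑ j, P j) x).toReal) ∂((n : ℝ≥0∞)⁻¹ • ∑ j, P j) ≤
        ∫ ω, f (fun i =>
          ((Q i).rnDeriv ((n : ℝ≥0∞)⁻¹ • ∑ j, Q j) ω).toReal) ∂((n : ℝ≥0∞)⁻¹ • ∑ j, Q j)) :
    ∀ i j, P i ≪ P j := by
  intro i j
  set μ : Measure Ω₁ := (n : ℝ≥0∞)⁻¹ • ∑ j, P j with hμ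
  set ν : Measure Ω₂ := (n : ℝ≥0∞)⁻¹ • ∑ j, Q j with hν
  haveI : IsProbabilityMeasure μ := avg_isProb n hn P
  haveI : IsProbabilityMeasure ν := avg_isProb n hn Q
  have hPiμ : P i ≪ μ := comp_ac_avg n hn P i
  have hPjμ : P j ≪ μ := comp_ac_avg n hn P j
  have hQiν : Q i ≪ ν := comp_ac_avg n hn Q i
  have hνQj : ν ≪ Q j := avg_ac n Q j (fun l => hequiv l j)
  -- notation for the RN derivative functions
  set g : Fin n → Ω₁ → ℝ := fun l x => ((P l).rnDeriv μ x).toReal with hg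
  set q : Fin n → Ω₂ → ℝ := fun l ω => ((Q l).rnDeriv ν ω).toReal with hq
  -- the bad set
  set A : Set Ω₁ := {x | (P j).rnDeriv μ x = 0} with hA
  have hAm : MeasurableSet A := (Measure.measurable_rnDeriv (P j) μ) (measurableSet_singleton 0)
  -- Step 1: (P i A).toReal ≤ ∫ fk dν for every k
  have key : ∀ k : ℕ, ((P i) A).toReal ≤
      ∫ ω, max (q i ω - (k : ℝ) * q j ω) 0 ∂ν := by
    intro k
    have hint : ∫ x in A, g i x ∂μ = ((P i) A).toReal :=
      Measure.setIntegral_toReal_rnDeriv hPiμ A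
    have hconv := convex_test n i j (k : ℝ)
    have h2 := hh _ hconv
    simp only at h2
    -- lower bound the left integral
    have hnonneg : 0 ≤ᵐ[μ] fun x => max (g i x - (k : ℝ) * g j x) 0 :=
      ae_of_all _ (fun x => le_max_right _ _)
    have hgi_int : Integrable (g i) μ := Measure.integrable_toReal_rnDeriv
    have hgj_int : Integrable (g j) μ := Measure.integrable_toReal_rnDeriv
    have hfk_int : Integrable (fun x => max (g i x - (k : ℝ) * g j x) 0) μ := by
      refine Integrable.mono hgi_int ?_ ?_
      · exact (hgi_int.sub (hgj_int.const_mul _)).aestronglyMeasurable.sup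
          aestronglyMeasurable_const
      · refine ae_of_all _ (fun x => ?_)
        rw [Real.norm_eq_abs, Real.norm_eq_abs, abs_of_nonneg (le_max_right _ _),
          abs_of_nonneg ENNReal.toReal_nonneg]
        refine max_le ?_ ENNReal.toReal_nonneg
        have : 0 ≤ (k : ℝ) * g j x := by positivity
        linarith [this]
    have hAeq : ∀ x ∈ A, g i x = max (g i x - (k : ℝ) * g j x) 0 := by
      intro x hx
      have : g j x = 0 := by simp [hg, hA.le]; rw [Set.mem_setOf_eq] at hx; simp [hg, hx]
      rw [this, mul_zero, sub_zero, max_eq_left ENNReal.toReal_nonneg]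
    calc ((P i) A).toReal = ∫ x in A, g i x ∂μ := hint.symm
      _ = ∫ x in A, max (g i x - (k : ℝ) * g j x) 0 ∂μ :=
          setIntegral_congr_fun hAm hAeq
      _ ≤ ∫ x, max (g i x - (k : ℝ) * g j x) 0 ∂μ :=
          setIntegral_le_integral hfk_int hnonneg
      _ ≤ ∫ ω, max (q i ω - (k : ℝ) * q j ω) 0 ∂ν := h2
  -- Step 2: the right side tends to 0
  have hqi_int : Integrable (q i) ν := Measure.integrable_toReal_rnDeriv
  have hqj_int : Integrable (q j) ν := Measure.integrable_toReal_rnDeriv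
  have hpos : ∀ᵐ ω ∂ν, 0 < q j ω := by
    filter_upwards [Measure.rnDeriv_pos' hνQj, Measure.rnDeriv_lt_top (Q j) ν] with ω h1 h2
    exact ENNReal.toReal_pos h1.ne' h2.ne
  have htend : Tendsto (fun k : ℕ => ∫ ω, max (q i ω - (k : ℝ) * q j ω) 0 ∂ν)
      atTop (𝓝 (∫ ω, (0 : ℝ) ∂ν)) := by
    refine tendsto_integral_of_dominated_convergence (fun ω => q i ω) ?_ hqi_int ?_ ?_
    · intro k
      exact ((hqi_int.sub (hqj_int.const_mul _)).aestronglyMeasurable.sup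
        aestronglyMeasurable_const)
    · intro k
      refine ae_of_all _ (fun ω => ?_)
      rw [Real.norm_eq_abs, abs_of_nonneg (le_max_right _ _)]
      refine max_le ?_ ENNReal.toReal_nonneg
      have : 0 ≤ (k : ℝ) * q j ω := by positivity
      linarith [this]
    · filter_upwards [hpos] with ω hω
      refine tendsto_const_nhds.congr' ?_
      have : ∀ᶠ k : ℕ in atTop, q i ω - (k : ℝ) * q j ω ≤ 0 := by
        have h1 : Tendsto (fun k : ℕ => (k : ℝ) * q j ω) atTop atTop :=
          (tendsto_natCast_atTop_atTop).atTop_mul_const hω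
        filter_upwards [h1.eventually_ge_atTop (q i ω)] with k hk
        linarith
      filter_upwards [this] with k hk
      exact (max_eq_right hk).symm
  rw [integral_zero] at htend
  -- conclude (P i) A = 0
  have hPiA : (P i) A = 0 := by
    have h0 : ((P i) A).toReal ≤ 0 :=
      le_of_tendsto_of_tendsto' tendsto_const_nhds htend (fun k => key k)
    have := ENNReal.toReal_nonneg (a := (P i) A)
    have h1 : ((P i) A).toReal = 0 := le_antisymm h0 this
    exact (ENNReal.toReal_eq_zero_iff _).mp h1 |>.resolve_right (measure_ne_top _ _)
  -- Step 3: deduce absolute continuity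
  intro s hs
  set t := toMeasurable (P j) s with ht
  have htm : MeasurableSet t := measurableSet_toMeasurable _ _
  have hts : s ⊆ t := subset_toMeasurable _ _
  have hPjt : (P j) t = 0 := by rw [ht, measure_toMeasurable]; exact hs
  -- μ-a.e. on t, rnDeriv (P j) μ = 0
  have hlin : ∫⁻ x in t, (P j).rnDeriv μ x ∂μ = 0 := by
    rw [Measure.setLIntegral_rnDeriv hPjμ t, hPjt]
  have hae0 : ∀ᵐ x ∂(μ.restrict t), (P j).rnDeriv μ x = 0 :=
    (lintegral_eq_zero_iff (Measure.measurable_rnDeriv _ _)).mp hlin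
  have hμ0 : μ (t ∩ Aᶜ) = 0 := by
    have : μ.restrict t Aᶜ = 0 := by
      rw [← nonpos_iff_eq_zero]
      refine le_of_eq_of_le ?_ (le_of_eq rfl)
      have := ae_iff.mp hae0
      exact this
    rwa [Measure.restrict_apply hAm.compl, Set.inter_comm] at this
  have hPi0 : (P i) (t ∩ Aᶜ) = 0 := hPiμ hμ0
  have : (P i) t = 0 := by
    rw [← nonpos_iff_eq_zero]
    have hsub : t ⊆ (t ∩ Aᶜ) ∪ A := by
      intro x hx
      by_cases hxA : x ∈ A
      · exact Or.inr hxA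
      · exact Or.inl ⟨hx, hxA⟩
    calc (P i) t ≤ (P i) ((t ∩ Aᶜ) ∪ A) := measure_mono hsub
      _ ≤ (P i) (t ∩ Aᶜ) + (P i) A := measure_union_le _ _
      _ = 0 := by rw [hPi0, hPiA, add_zero]
  exact le_antisymm (le_of_le_of_eq (measure_mono hts) this) (zero_le)
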